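/- Suppose W is a random variable with values in Σ, jointly distributed with (X_A, X_B), such that Pr[W=y] > 0 for all y and X_A and X_B are conditionally independent given W. Define h_A*(x_A)(y) = Pr[W=y|X_A=x_A], h_B*(x_B)(y) = Pr[W=y|X_B=x_B] and p*(y) = Pr[W=y]. Then MIG^f(h_A*, h_B*, p*) = MI^f(X_A;X_B), and moreover MIG^f(h_A, h_B, p) ≤ MI^f(X_A;X_B) for every h_A : Σ_A → Δ_Σ, h_B : Σ_B → Δ_Σ and every p ∈ Δ_Σ with strictly positive entries. -/

import Mathlib

noncomputable section

variable {SA SB S : Type*}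

/-- Joint probability `Pr[X_A = a, X_B = b]` induced by the joint pmf `ν` of `(X_A, X_B, Y)`. -/
def jAB [Fintype S] (ν : SA → SB → S → ℝ) (a : SA) (b : SB) : ℝ := ∑ y, ν a b y

/-- Joint probability `Pr[X_A = a, Y = y]`. -/
def jAY [Fintype SB] (ν : SA → SB → S → ℝ) (a : SA) (y : S) : ℝ := ∑ b, ν a b y

/-- Joint probability `Pr[X_B = b, Y = y]`. -/
def jBY [Fintype SA] (ν : SA → SB → S → ℝ) (b : SB) (y : S) : ℝ := ∑ a, ν a b y

/-- Marginal probability `Pr[X_A = a]`. -/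
def prA [Fintype SB] [Fintype S] (ν : SA → SB → S → ℝ) (a : SA) : ℝ := ∑ b, ∑ y, ν a b y

/-- Marginal probability `Pr[X_B = b]`. -/
def prB [Fintype SA] [Fintype S] (ν : SA → SB → S → ℝ) (b : SB) : ℝ := ∑ a, ∑ y, ν a b y

/-- Marginal probability `Pr[Y = y]`. -/
def prY [Fintype SA] [Fintype SB] (ν : SA → SB → S → ℝ) (y : S) : ℝ := ∑ a, ∑ b, ν a b y

/-- Pointwise mutual information `K(a,b) = Pr[a,b]/(Pr[a]·Pr[b])`. -/
def K [Fintype SA] [Fintype SB] [Fintype S] (ν : SA → SB → S → ℝ) (a : SA) (b : SB) : ℝ :=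
  jAB ν a b / (prA ν a * prB ν b)

/-- Conditional probability `Pr[Y = y | X_A = a]`. -/
def condA [Fintype SB] [Fintype S] (ν : SA → SB → S → ℝ) (a : SA) (y : S) : ℝ :=
  jAY ν a y / prA ν a

/-- Conditional probability `Pr[Y = y | X_B = b]`. -/
def condB [Fintype SA] [Fintype S] (ν : SA → SB → S → ℝ) (b : SB) (y : S) : ℝ :=
  jBY ν b y / prB ν b

/-- `X_A` and `X_B` are conditionally independent given `Y`:
`Pr[a, b | y] = Pr[a | y] · Pr[b | y]` for all `a, b, y`. -/
def CondIndep [Fintype SA] [Fintype SB] (ν : SA → SB → S → ℝ) : Prop :=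
  ∀ a b y, ν a b y / prY ν y = (jAY ν a y / prY ν y) * (jBY ν b y / prY ν y)

/-- `ν` is a probability mass function. -/
def IsPMF [Fintype SA] [Fintype SB] [Fintype S] (ν : SA → SB → S → ℝ) : Prop :=
  (∀ a b y, 0 ≤ ν a b y) ∧ ∑ a, ∑ b, ∑ y, ν a b y = 1

/-- `p` is a probability vector: nonnegative entries summing to `1`. -/
def IsProbVec {T : Type*} [Fintype T] (p : T → ℝ) : Prop := (∀ t, 0 ≤ p t) ∧ ∑ t, p t = 1

/-- The convex conjugate `f*(x) = sup_t (t·x − f(t))`, as a real-valued supremum. -/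
def fconj (f : ℝ → ℝ) (x : ℝ) : ℝ := sSup (Set.range fun t => t * x - f t)

/-- `c` is a subgradient of `f` at `t`: `f(s) ≥ f(t) + c·(s − t)` for all `s`. -/
def IsSubgradientAt (f : ℝ → ℝ) (t c : ℝ) : Prop := ∀ s : ℝ, f t + c * (s - t) ≤ f s

/-- The f-mutual information `MI^f(X_A;X_B) = Σ_{a,b} Pr[a]·Pr[b]·f(K(a,b))`. -/
def MIf [Fintype SA] [Fintype SB] [Fintype S] (f : ℝ → ℝ) (ν : SA → SB → S → ℝ) : ℝ :=
  ∑ a, ∑ b, prA ν a * prB ν b * f (K ν a b)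

/-- The agreement `g(a,b) = Σ_y h_A(a)(y)·h_B(b)(y)/p(y)`. -/
def gagr [Fintype S] (hA : SA → S → ℝ) (hB : SB → S → ℝ) (p : S → ℝ) (a : SA) (b : SB) : ℝ :=
  ∑ y, hA a y * hB b y / p y

/-- Expected `f`-mutual information gain
`MIG^f(h_A,h_B,p) = Σ Pr[a,b]·f'(g(a,b)) − Σ Pr[a]·Pr[b]·f*(f'(g(a,b)))`. -/
def MIG [Fintype SA] [Fintype SB] [Fintype S] (f : ℝ → ℝ) (ν : SA → SB → S → ℝ)
    (hA : SA → S → ℝ) (hB : SB → S → ℝ) (p : S → ℝ) : ℝ :=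
  ∑ a, ∑ b, jAB ν a b * deriv f (gagr hA hB p a b)
    - ∑ a, ∑ b, prA ν a * prB ν b * fconj f (deriv f (gagr hA hB p a b))

/-- Each agent's expected payment in the multi-task common ground mechanism `MCG(f)`. -/
def Pay [Fintype SA] [Fintype SB] [Fintype S] (f : ℝ → ℝ) (ν : SA → SB → S → ℝ)
    (sA : SA → S → ℝ) (sB : SB → S → ℝ) : ℝ :=
  MIG f ν sA sB (prY ν)

/-- `({a^{x_A}}, {b^{x_B}}, r)` is a solution of the agreement system:
probability vectors, `r` strictly positive, with
`Σ_y a^{x_A}(y)·b^{x_B}(y)/r(y) = K(x_A,x_B)` for all `x_A, x_B`. -/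
def AgreementSolution [Fintype SA] [Fintype SB] [Fintype S] (ν : SA → SB → S → ℝ)
    (a : SA → S → ℝ) (b : SB → S → ℝ) (r : S → ℝ) : Prop :=
  (∀ xa, IsProbVec (a xa)) ∧ (∀ xb, IsProbVec (b xb)) ∧ IsProbVec r ∧ (∀ y, 0 < r y) ∧
    ∀ xa xb, (∑ y, a xa y * b xb y / r y) = K ν xa xb

/-- The prior is well-defined: any two solutions of the agreement system coincide
up to a permutation of `Σ`. -/
def WellDefinedPrior [Fintype SA] [Fintype SB] [Fintype S] (ν : SA → SB → S → ℝ) : Prop :=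
  ∀ (a : SA → S → ℝ) (b : SB → S → ℝ) (r : S → ℝ)
    (c : SA → S → ℝ) (d : SB → S → ℝ) (r' : S → ℝ),
    AgreementSolution ν a b r → AgreementSolution ν c d r' →
    ∃ π : Equiv.Perm S, ∀ y, r (π y) = r' y ∧ (∀ xa, a xa (π y) = c xa y)
      ∧ (∀ xb, b xb (π y) = d xb y)

/-- The prior is stable: fixing the truthful `A`-side (resp. `B`-side) of the agreement
system, the only solution for the other side is the truthful one. -/
def StablePrior [Fintype SA] [Fintype SB] [Fintype S] (ν : SA → SB → S → ℝ) : Prop :=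
  (∀ b : SB → S → ℝ, (∀ xb, IsProbVec (b xb)) →
    (∀ xa xb, (∑ y, condA ν xa y * b xb y / prY ν y) = K ν xa xb) →
    ∀ xb y, b xb y = condB ν xb y) ∧
  (∀ a : SA → S → ℝ, (∀ xa, IsProbVec (a xa)) →
    (∀ xa xb, (∑ y, a xa y * condB ν xb y / prY ν y) = K ν xa xb) →
    ∀ xa y, a xa y = condA ν xa y)

lemma tangent_le {f : ℝ → ℝ} (hconv : ConvexOn ℝ Set.univ f) (hdiff : Differentiable ℝ f)
    (t s : ℝ) : f t + deriv f t * (s - t) ≤ f s := by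
  rcases lt_trichotomy t s with h | h | h
  · have h2 := hconv.deriv_le_slope (Set.mem_univ t) (Set.mem_univ s) h (hdiff t)
    rw [slope_def_field] at h2
    have h' : 0 < s - t := by linarith
    rw [le_div_iff₀ h'] at h2
    nlinarith
  · simp [h]
  · have h2 := hconv.slope_le_deriv (Set.mem_univ s) (Set.mem_univ t) h (hdiff t)
    rw [slope_def_field] at h2
    have h' : 0 < t - s := by linarith
    rw [div_le_iff₀ h'] at h2
    nlinarith

/-- If `W` (the `Σ`-valued coordinate of the joint pmf `ν`) has positive prior and
`X_A, X_B` are conditionally independent given `W`, then the Bayesian posterior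
predictors for `W` together with the prior of `W` attain
`MIG^f = MI^f(X_A;X_B)`, and `MIG^f(h_A,h_B,p) ≤ MI^f(X_A;X_B)` for all hypotheses
`h_A, h_B` and strictly positive probability vectors `p`. -/
theorem stmt_4 [Fintype SA] [Fintype SB] [Fintype S] [Nonempty SA] [Nonempty SB] [Nonempty S]
    (ν : SA → SB → S → ℝ) (hν : IsPMF ν)
    (hA : ∀ a, 0 < prA ν a) (hB : ∀ b, 0 < prB ν b) (hW : ∀ y, 0 < prY ν y)
    (hci : CondIndep ν)
    (f : ℝ → ℝ) (hconv : ConvexOn ℝ Set.univ f) (hdiff : Differentiable ℝ f) (hf1 : f 1 = 0)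
    (hconj : ∀ t : ℝ, fconj f (deriv f t) = t * deriv f t - f t) :
    MIG f ν (condA ν) (condB ν) (prY ν) = MIf f ν
    ∧ ∀ (hA' : SA → S → ℝ) (hB' : SB → S → ℝ) (p : S → ℝ),
        (∀ a, IsProbVec (hA' a)) → (∀ b, IsProbVec (hB' b)) →
        IsProbVec p → (∀ y, 0 < p y) →
        MIG f ν hA' hB' p ≤ MIf f ν := by

  -- jAB = prA * prB * K
  have hjab : ∀ a b, jAB ν a b = prA ν a * prB ν b * K ν a b := by
    intro a b
    have := (hA a).ne'
    have := (hB b).ne'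
    rw [K]
    field_simp
  -- per-term identity
  have hterm : ∀ (a : SA) (b : SB) (x : ℝ),
      jAB ν a b * deriv f x - prA ν a * prB ν b * fconj f (deriv f x)
        = prA ν a * prB ν b * (f x + deriv f x * (K ν a b - x)) := by
    intro a b x
    rw [hconj, hjab]
    ring
  -- MIG as a single sum
  have hMIG : ∀ (hA' : SA → S → ℝ) (hB' : SB → S → ℝ) (p : S → ℝ),
      MIG f ν hA' hB' p = ∑ a, ∑ b, prA ν a * prB ν b *
        (f (gagr hA' hB' p a b) + deriv f (gagr hA' hB' p a b)
          * (K ν a b - gagr hA' hB' p a b)) := by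
    intro hA' hB' p
    rw [MIG, ← Finset.sum_sub_distrib]
    refine Finset.sum_congr rfl fun a _ => ?_
    rw [← Finset.sum_sub_distrib]
    exact Finset.sum_congr rfl fun b _ => hterm a b _
  constructor
  · -- truthful agreement equals K
    have hg : ∀ a b, gagr (condA ν) (condB ν) (prY ν) a b = K ν a b := by
      intro a b
      have hsum : ∀ y, condA ν a y * condB ν b y / prY ν y
          = ν a b y / (prA ν a * prB ν b) := by
        intro y
        have h1 := hci a b y
        have hy := (hW y).ne'
        have ha := (hA a).ne'
        have hb := (hB b).ne'
        have h1' : (ν a b y * prY ν y) * prY ν y = (jAY ν a y * jBY ν b y) * prY ν y := by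
          field_simp at h1
          linear_combination prY ν y * h1
        have h2 : ν a b y * prY ν y = jAY ν a y * jBY ν b y := mul_right_cancel₀ hy h1'
        rw [condA, condB]
        field_simp
        linear_combination (-1 : ℝ) * h2
      rw [gagr]
      simp_rw [hsum]
      rw [← Finset.sum_div, K, jAB]
    rw [hMIG, MIf]
    refine Finset.sum_congr rfl fun a _ => Finset.sum_congr rfl fun b _ => ?_
    rw [hg]
    ring
  · intro hA' hB' p _ _ _ _
    rw [hMIG, MIf]
    refine Finset.sum_le_sum fun a _ => Finset.sum_le_sum fun b _ => ?_
    have hpos : 0 ≤ prA ν a * prB ν b := le_of_lt (mul_pos (hA a) (hB b))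
    exact mul_le_mul_of_nonneg_left (tangent_le hconv hdiff _ _) hpos
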